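/- Let λ_k ≠ λ_K with λ_k - λ_K not a multiple of 2πi, and let φ, ψ be 1-periodic functions with (D_t + A(t) + λ_k)φ = 0 and (-D_t + A(t)* + λ̄_K)ψ = 0. Then for every t ∈ ℝ, (φ(t), ψ(t))_Y = 0. -/

import Mathlib

open MeasureTheory

/-- pointwise orthogonality across distinct eigenvalues.  If
`(D_t + A(t) + λ_k)φ = 0`, `(-D_t + A(t)* + λ̄_K)ψ = 0` (weakly), both `φ, ψ`
1-periodic, and `λ_k - λ_K` is not an integer multiple of `2πi`, then
`(φ(t), ψ(t))_Y = 0` for every `t ∈ ℝ`. -/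
theorem stmt10
    {X Y : Type*} [NormedAddCommGroup X] [InnerProductSpace ℂ X] [CompleteSpace X]
    [NormedAddCommGroup Y] [InnerProductSpace ℂ Y] [CompleteSpace Y]
    (e : X →L[ℂ] Y) (A : ℝ → X →L[ℂ] Y) (hAper : ∀ t, A (t + 1) = A t)
    (lamk lamK : ℂ) (hne : lamk ≠ lamK)
    (hne2π : ∀ n : ℤ, lamk - lamK ≠ 2 * Real.pi * Complex.I * n)
    (φ : ℝ → X) (φ' : ℝ → Y) (ψ ψ' : ℝ → Y)
    (hφper : Function.Periodic φ 1) (hψper : Function.Periodic ψ 1)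
    (hφderiv : ∀ t, HasDerivAt (fun s => e (φ s)) (φ' t) t)
    (hψderiv : ∀ t, HasDerivAt ψ (ψ' t) t)
    (hφeig : ∀ t, φ' t + A t (φ t) + lamk • e (φ t) = 0)
    (hψeig : ∀ (x : X) (t : ℝ),
      (inner ℂ (ψ' t) (e x) : ℂ) =
        (inner ℂ (ψ t) ((A t x : Y)) : ℂ) + lamK * (inner ℂ (ψ t) (e x) : ℂ)) :
    ∀ t : ℝ, (inner ℂ (ψ t) (e (φ t)) : ℂ) = 0 := by
  set f : ℝ → ℂ := fun t => (inner ℂ (ψ t) (e (φ t)) : ℂ) with hf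
  have hfd : ∀ t, HasDerivAt f ((lamK - lamk) * f t) t := by
    intro t
    have h := (hψderiv t).inner ℂ (hφderiv t)
    have hφ' : φ' t = -(A t (φ t)) - lamk • e (φ t) := by
      have h0 := hφeig t
      have : φ' t = -(A t (φ t)) - lamk • e (φ t) + (φ' t + A t (φ t) + lamk • e (φ t)) := by
        abel
      rw [h0, add_zero] at this; exact this
    have key : (inner ℂ (ψ t) (φ' t) : ℂ) + (inner ℂ (ψ' t) (e (φ t)) : ℂ)
        = (lamK - lamk) * f t := by
      rw [hφ', hψeig (φ t) t]
      simp only [inner_sub_right, inner_neg_right, inner_smul_right, hf]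
      ring
    rwa [key] at h
  set g : ℝ → ℂ := fun t => Complex.exp ((lamk - lamK) * t) * f t with hg
  have hgd : ∀ t, HasDerivAt g 0 t := by
    intro t
    have h1 : HasDerivAt (fun s : ℝ => Complex.exp ((lamk - lamK) * s))
        ((lamk - lamK) * Complex.exp ((lamk - lamK) * t)) t := by
      have := ((hasDerivAt_id t).ofReal_comp.const_mul (lamk - lamK)).cexp
      simpa [mul_comm] using this
    have h2 : HasDerivAt g ((lamk - lamK) * Complex.exp ((lamk - lamK) * t) * f t + Complex.exp ((lamk - lamK) * t) * ((lamK - lamk) * f t)) t := h1.mul (hfd t)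
    convert h2 using 1
    ring
  have hconst : ∀ x y : ℝ, g x = g y :=
    is_const_of_deriv_eq_zero (fun x => (hgd x).differentiableAt)
      (fun x => (hgd x).deriv)
  have hfval : ∀ t : ℝ, f t = Complex.exp ((lamK - lamk) * t) * f 0 := by
    intro t
    have h := hconst t 0
    simp only [hg, Complex.ofReal_zero, mul_zero, Complex.exp_zero, one_mul] at h
    have : f t = (Complex.exp ((lamk - lamK) * t))⁻¹ * f 0 := by
      rw [← h]; field_simp
    rw [this, ← Complex.exp_neg]
    congr 2
    ring
  have hf1 : f 1 = f 0 := by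
    simp only [hf]
    have h1 : φ (1 : ℝ) = φ 0 := by have := hφper 0; simpa using this
    have h2 : ψ (1 : ℝ) = ψ 0 := by have := hψper 0; simpa using this
    rw [h1, h2]
  have hf0 : f 0 = 0 := by
    by_contra h0
    have := hfval 1
    rw [hf1] at this
    have hx : Complex.exp ((lamK - lamk) * (1 : ℝ)) = 1 := by
      have hmul : (Complex.exp ((lamK - lamk) * (1 : ℝ)) - 1) * f 0 = 0 := by
        linear_combination -this
      rcases mul_eq_zero.mp hmul with h | h
      · exact sub_eq_zero.mp h
      · exact absurd h h0
    rw [Complex.ofReal_one, mul_one, Complex.exp_eq_one_iff] at hx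
    obtain ⟨n, hn⟩ := hx
    apply hne2π (-n)
    push_cast
    linear_combination -hn
  intro t
  rw [show (inner ℂ (ψ t) (e (φ t)) : ℂ) = f t from rfl, hfval t, hf0, mul_zero]
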